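/- For every m ≥ 1 and every even n ≥ 2, the number of m-tuples (α_1,…,α_m) ∈ F_n^m that have a triple matching is at most (4m³/n)·|F_n|^m; equivalently, a uniformly random element of F_n^m has no triple matchings with probability at least 1 − 4m³/n. -/

import Mathlib

open scoped Classical

/-- The set of fixed-point-free involutions of `{1,…,n}` (modeled on `Fin n`). -/
noncomputable def fpf (n : ℕ) : Finset (Equiv.Perm (Fin n)) :=
  Finset.univ.filter (fun σ => σ * σ = 1 ∧ ∀ i, σ i ≠ i)

/-- A tuple `(α_1, …, α_m)` has a triple matching if `α_i(k) = α_j(k) = α_p(k)` for some `k`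
and some distinct indices `i < j < p`. -/
def hasTripleMatching {m n : ℕ} (α : Fin m → Equiv.Perm (Fin n)) : Prop :=
  ∃ k : Fin n, ∃ i j p : Fin m, i < j ∧ j < p ∧ α i k = α j k ∧ α j k = α p k

lemma mem_fpf' {n : ℕ} {σ : Equiv.Perm (Fin n)} :
    σ ∈ fpf n ↔ σ * σ = 1 ∧ ∀ i, σ i ≠ i := by simp [fpf]

lemma fpf_conj' {n : ℕ} {σ : Equiv.Perm (Fin n)} (a b : Fin n) (hσ : σ ∈ fpf n) :
    Equiv.swap a b * σ * Equiv.swap a b ∈ fpf n := by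
  rw [mem_fpf'] at hσ ⊢
  obtain ⟨h1, h2⟩ := hσ
  constructor
  · have hs : Equiv.swap a b * Equiv.swap a b = 1 := Equiv.swap_mul_self a b
    calc (Equiv.swap a b * σ * Equiv.swap a b) * (Equiv.swap a b * σ * Equiv.swap a b)
        = Equiv.swap a b * (σ * ((Equiv.swap a b * Equiv.swap a b) * σ)) * Equiv.swap a b := by
          group
      _ = 1 := by rw [hs, one_mul, h1, mul_one, hs]
  · intro x hx
    simp only [Equiv.Perm.mul_apply] at hx
    have := congrArg (Equiv.swap a b) hx
    rw [Equiv.swap_apply_self] at this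
    exact h2 _ this

lemma fiber_mul_le' {n : ℕ} (k v : Fin n) :
    ((fpf n).filter (fun σ => σ k = v)).card * (n - 1) ≤ (fpf n).card := by
  by_cases hvk : v = k
  · have : (fpf n).filter (fun σ => σ k = v) = ∅ := by
      rw [Finset.filter_eq_empty_iff]
      intro σ hσ h
      exact (mem_fpf'.mp hσ).2 k (hvk ▸ h)
    simp [this]
  · have := Finset.card_le_card_of_injOn
      (f := fun q : Equiv.Perm (Fin n) × Fin n => Equiv.swap v q.2 * q.1 * Equiv.swap v q.2)
      (s := ((fpf n).filter (fun σ => σ k = v)) ×ˢ (Finset.univ.erase k))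
      (t := fpf n)
      (by
        rintro ⟨σ, v'⟩ hq
        simp only [Finset.mem_coe, Finset.mem_product, Finset.mem_filter] at hq
        exact fpf_conj' v v' hq.1.1)
      (by
        rintro ⟨σ₁, v₁⟩ h1 ⟨σ₂, v₂⟩ h2 heq
        simp only at heq
        simp only [Finset.mem_coe, Finset.mem_product, Finset.mem_filter,
          Finset.mem_erase] at h1 h2
        have key : ∀ (σ : Equiv.Perm (Fin n)) (v' : Fin n), σ k = v → v' ≠ k →
            (Equiv.swap v v' * σ * Equiv.swap v v') k = v' := by
          intro σ v' hσk hv'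
          simp only [Equiv.Perm.mul_apply]
          rw [Equiv.swap_apply_of_ne_of_ne (Ne.symm hvk) (Ne.symm hv'), hσk,
            Equiv.swap_apply_left]
        have hv12 : v₁ = v₂ := by
          have e1 := key σ₁ v₁ h1.1.2 h1.2.1
          have e2 := key σ₂ v₂ h2.1.2 h2.2.1
          rw [show Equiv.swap v v₁ * σ₁ * Equiv.swap v v₁
            = Equiv.swap v v₂ * σ₂ * Equiv.swap v v₂ from heq] at e1
          rw [e1] at e2
          exact e2
        subst hv12
        have : σ₁ = σ₂ := mul_left_cancel (mul_right_cancel heq)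
        simp [this])
    calc ((fpf n).filter (fun σ => σ k = v)).card * (n - 1)
        = (((fpf n).filter (fun σ => σ k = v)) ×ˢ (Finset.univ.erase k)).card := by
          rw [Finset.card_product, Finset.card_erase_of_mem (Finset.mem_univ k),
            Finset.card_univ, Fintype.card_fin]
      _ ≤ (fpf n).card := this

lemma fiber_sum' {n : ℕ} (k : Fin n) :
    ∑ v : Fin n, ((fpf n).filter (fun σ => σ k = v)).card = (fpf n).card :=
  (Finset.card_eq_sum_card_fiberwise (fun σ _ => Finset.mem_univ (σ k))).symm

lemma event_card_le' {n m : ℕ} (hm : 3 ≤ m) (k : Fin n) (i j p : Fin m)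
    (hij : i ≠ j) (hip : i ≠ p) (hjp : j ≠ p) :
    (Finset.univ.filter (fun α : Fin m → Equiv.Perm (Fin n) =>
        (∀ t, α t ∈ fpf n) ∧ α i k = α j k ∧ α j k = α p k)).card * (n-1)^2
      ≤ (fpf n).card ^ m := by
  classical
  set F := fpf n with hF
  set E := Finset.univ.filter (fun α : Fin m → Equiv.Perm (Fin n) =>
        (∀ t, α t ∈ F) ∧ α i k = α j k ∧ α j k = α p k) with hE
  set N : Fin n → ℕ := fun v => (F.filter (fun σ => σ k = v)).card with hN
  set s : Finset (Fin m) := {i, j, p} with hs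
  have hscard : s.card = 3 := by
    rw [hs, Finset.card_insert_of_notMem (by simp [hij, hip]),
      Finset.card_insert_of_notMem (by simp [hjp]), Finset.card_singleton]
  have hfib : ∀ v : Fin n, (E.filter (fun α => α j k = v)) =
      Fintype.piFinset (fun t => if t ∈ s then F.filter (fun σ => σ k = v) else F) := by
    intro v
    ext α
    simp only [Finset.mem_filter, hE, Finset.mem_univ, true_and, Fintype.mem_piFinset]
    constructor
    · rintro ⟨⟨hall, h1, h2⟩, hv⟩ t
      by_cases ht : t ∈ s
      · rw [if_pos ht]
        rw [hs] at ht
        simp only [Finset.mem_insert, Finset.mem_singleton] at ht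
        refine Finset.mem_filter.mpr ⟨hall t, ?_⟩
        rcases ht with rfl | rfl | rfl
        · rw [h1, hv]
        · exact hv
        · rw [← h2, hv]
      · rw [if_neg ht]; exact hall t
    · intro h
      have hmem : ∀ t, α t ∈ F := by
        intro t
        have := h t
        by_cases ht : t ∈ s
        · rw [if_pos ht] at this; exact (Finset.mem_filter.mp this).1
        · rwa [if_neg ht] at this
      have hval : ∀ t ∈ s, α t k = v := by
        intro t ht
        have := h t
        rw [if_pos ht] at this
        exact (Finset.mem_filter.mp this).2
      have hi : α i k = v := hval i (by simp [hs])
      have hj : α j k = v := hval j (by simp [hs])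
      have hp : α p k = v := hval p (by simp [hs])
      exact ⟨⟨hmem, by rw [hi, hj], by rw [hj, hp]⟩, hj⟩
  have hfibcard : ∀ v : Fin n, (E.filter (fun α => α j k = v)).card
      = N v ^ 3 * F.card ^ (m - 3) := by
    intro v
    rw [hfib v, Fintype.card_piFinset]
    rw [← Finset.prod_filter_mul_prod_filter_not Finset.univ (· ∈ s)]
    have h1 : ∀ t ∈ Finset.univ.filter (· ∈ s),
        (if t ∈ s then F.filter (fun σ => σ k = v) else F).card = N v := by
      intro t ht
      simp only [Finset.mem_filter] at ht
      rw [if_pos ht.2]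
    have h2 : ∀ t ∈ Finset.univ.filter (¬ · ∈ s),
        (if t ∈ s then F.filter (fun σ => σ k = v) else F).card = F.card := by
      intro t ht
      simp only [Finset.mem_filter] at ht
      rw [if_neg ht.2]
    rw [Finset.prod_congr rfl h1, Finset.prod_congr rfl h2, Finset.prod_const,
      Finset.prod_const]
    congr 1
    · congr 1
      rw [Finset.filter_univ_mem, hscard]
    · congr 1
      have : Finset.univ.filter (¬ · ∈ s) = sᶜ := by
        ext t; simp
      rw [this, Finset.card_compl, Fintype.card_fin, hscard]
  have hEcard : E.card = ∑ v : Fin n, N v ^ 3 * F.card ^ (m - 3) := by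
    rw [Finset.card_eq_sum_card_fiberwise (fun α _ => Finset.mem_univ (α j k))]
    exact Finset.sum_congr rfl (fun v _ => hfibcard v)
  calc E.card * (n-1)^2
      = ∑ v : Fin n, N v * ((N v * (n-1))^2 * F.card ^ (m - 3)) := by
        rw [hEcard, Finset.sum_mul]
        exact Finset.sum_congr rfl (fun v _ => by ring)
    _ ≤ ∑ v : Fin n, N v * (F.card ^ 2 * F.card ^ (m - 3)) := by
        refine Finset.sum_le_sum (fun v _ => ?_)
        exact Nat.mul_le_mul_left _ (Nat.mul_le_mul_right _
          (Nat.pow_le_pow_left (fiber_mul_le' k v) 2))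
    _ = (∑ v : Fin n, N v) * (F.card ^ 2 * F.card ^ (m - 3)) := by
        rw [Finset.sum_mul]
    _ = F.card ^ (1 + (2 + (m - 3))) := by
        rw [fiber_sum' k, ← hF, pow_add, pow_add, pow_one]
    _ = F.card ^ m := by congr 1; omega

/-- The number of `m`-tuples of fixed-point-free involutions of `{1,…,n}` with a triple
matching is at most `(4m³/n)·|F_n|^m`. -/
theorem card_triple_matchings_le (m n : ℕ) (hm : 1 ≤ m) (hn : Even n) (h2 : 2 ≤ n) :
    ((Finset.univ.filter (fun α : Fin m → Equiv.Perm (Fin n) =>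
        (∀ i, α i ∈ fpf n) ∧ hasTripleMatching α)).card : ℝ)
      ≤ (4 * m ^ 3 / n) * ((fpf n).card : ℝ) ^ m := by
  classical
  by_cases hm3 : 3 ≤ m
  · set F := fpf n with hF
    set Bad := Finset.univ.filter (fun α : Fin m → Equiv.Perm (Fin n) =>
        (∀ i, α i ∈ fpf n) ∧ hasTripleMatching α) with hBad
    set s : Finset (Fin n × Fin m × Fin m × Fin m) :=
      Finset.univ.filter (fun q => q.2.1 < q.2.2.1 ∧ q.2.2.1 < q.2.2.2) with hs
    set Ev : Fin n × Fin m × Fin m × Fin m → Finset (Fin m → Equiv.Perm (Fin n)) :=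
      fun q => Finset.univ.filter (fun α : Fin m → Equiv.Perm (Fin n) =>
        (∀ t, α t ∈ fpf n) ∧ α q.2.1 q.1 = α q.2.2.1 q.1 ∧ α q.2.2.1 q.1 = α q.2.2.2 q.1)
      with hEv
    have hsub : Bad ⊆ s.biUnion Ev := by
      intro α hα
      rw [hBad, Finset.mem_filter] at hα
      obtain ⟨-, hall, k, i, j, p, hij, hjp, e1, e2⟩ := hα
      refine Finset.mem_biUnion.mpr ⟨(k, i, j, p), ?_, ?_⟩
      · simp [hs, hij, hjp]
      · simp only [hEv, Finset.mem_filter, Finset.mem_univ, true_and]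
        exact ⟨hall, e1, e2⟩
    have hkey : Bad.card * (n-1)^2 ≤ n * m^3 * F.card ^ m := by
      calc Bad.card * (n-1)^2
          ≤ (∑ q ∈ s, (Ev q).card) * (n-1)^2 := by
            exact Nat.mul_le_mul_right _
              ((Finset.card_le_card hsub).trans Finset.card_biUnion_le)
        _ = ∑ q ∈ s, (Ev q).card * (n-1)^2 := by rw [Finset.sum_mul]
        _ ≤ ∑ q ∈ s, F.card ^ m := by
            refine Finset.sum_le_sum (fun q hq => ?_)
            rw [hs, Finset.mem_filter] at hq
            exact event_card_le' hm3 q.1 q.2.1 q.2.2.1 q.2.2.2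
              (ne_of_lt hq.2.1) (ne_of_lt (hq.2.1.trans hq.2.2)) (ne_of_lt hq.2.2)
        _ = s.card * F.card ^ m := by rw [Finset.sum_const, smul_eq_mul]
        _ ≤ (n * (m * (m * m))) * F.card ^ m := by
            refine Nat.mul_le_mul_right _ ?_
            calc s.card ≤ Fintype.card (Fin n × Fin m × Fin m × Fin m) :=
                Finset.card_le_univ s
              _ = n * (m * (m * m)) := by
                simp [Fintype.card_prod, Fintype.card_fin]
        _ = n * m^3 * F.card ^ m := by ring
    have hcast : (Bad.card : ℝ) * ((n:ℝ) - 1)^2 ≤ (n:ℝ) * (m:ℝ)^3 * (F.card : ℝ) ^ m := by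
      have := (Nat.cast_le (α := ℝ)).mpr hkey
      push_cast [Nat.cast_sub (show 1 ≤ n by omega)] at this
      convert this using 2
    have hn2 : (2:ℝ) ≤ (n:ℝ) := by exact_mod_cast h2
    have hpos : (0:ℝ) < ((n:ℝ) - 1)^2 := by nlinarith
    have hnpos : (0:ℝ) < (n:ℝ) := by linarith
    have hac : (0:ℝ) ≤ (m:ℝ)^3 * (F.card : ℝ) ^ m := by positivity
    have hB0 : (0:ℝ) ≤ (Bad.card : ℝ) := by positivity
    rw [div_mul_eq_mul_div, le_div_iff₀ hnpos]
    have hfac : (0:ℝ) ≤ ((n:ℝ) - 2) * (3*(n:ℝ) - 2) :=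
      mul_nonneg (by linarith) (by linarith)
    have step1 : (Bad.card : ℝ) * (n:ℝ) * ((n:ℝ) - 1)^2 ≤ (n:ℝ)^2 * ((m:ℝ)^3 * (F.card:ℝ)^m) := by
      nlinarith [hcast, hn2, hB0]
    have step2 : (n:ℝ)^2 * ((m:ℝ)^3 * (F.card:ℝ)^m)
        ≤ 4 * ((n:ℝ) - 1)^2 * ((m:ℝ)^3 * (F.card:ℝ)^m) := by
      nlinarith [hfac, hac]
    have : ((Bad.card : ℝ) * (n:ℝ)) * ((n:ℝ) - 1)^2
        ≤ (4 * (m:ℝ)^3 * (F.card:ℝ)^m) * ((n:ℝ) - 1)^2 := by nlinarith [step1, step2]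
    have hfinal := le_of_mul_le_mul_right this hpos
    calc (Bad.card : ℝ) * (n:ℝ) ≤ 4 * (m:ℝ)^3 * (F.card:ℝ)^m := hfinal
      _ = 4 * (m:ℝ)^3 * ((fpf n).card : ℝ)^m := by rw [hF]
  · -- m < 3 : no triple matching possible
    have hempty : Finset.univ.filter (fun α : Fin m → Equiv.Perm (Fin n) =>
        (∀ i, α i ∈ fpf n) ∧ hasTripleMatching α) = ∅ := by
      rw [Finset.filter_eq_empty_iff]
      rintro α - ⟨-, k, i, j, p, hij, hjp, -⟩
      have hi : (i:ℕ) < j := hij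
      have hj : (j:ℕ) < p := hjp
      have := p.isLt
      omega
    rw [hempty]
    simp only [Finset.card_empty, Nat.cast_zero]
    positivity
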